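/- π = 1/(π³-1)^(1/3) - (π³-1)^(1/3)/π + (3(1 - π³ + π⁶)/(π²(π³-1)^(2/3)) + (1 + 3π³ - 6π⁶ + π⁹)/(π⁶ - π³))^(1/3). -/

import Mathlib

noncomputable def cbrt (x : ℝ) : ℝ := if x < 0 then -((-x) ^ ((1:ℝ)/3)) else x ^ ((1:ℝ)/3)

lemma cbrt_nonneg_eq {x : ℝ} (hx : 0 ≤ x) : cbrt x = x ^ ((1:ℝ)/3) := by
  simp [cbrt, not_lt.mpr hx]

lemma cbrt_cube {x : ℝ} (hx : 0 ≤ x) : (cbrt x) ^ 3 = x := by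
  rw [cbrt_nonneg_eq hx, ← Real.rpow_natCast (x ^ ((1:ℝ)/3)) 3, ← Real.rpow_mul hx]
  norm_num

lemma cbrt_of_cube {u : ℝ} (hu : 0 ≤ u) : cbrt (u ^ 3) = u := by
  rw [cbrt_nonneg_eq (by positivity), ← Real.rpow_natCast u 3, ← Real.rpow_mul hu]
  norm_num

theorem pi_cube_root_identity :
    Real.pi = 1 / cbrt (Real.pi ^ 3 - 1) - cbrt (Real.pi ^ 3 - 1) / Real.pi +
      cbrt (3 * (1 - Real.pi ^ 3 + Real.pi ^ 6) / (Real.pi ^ 2 * (cbrt (Real.pi ^ 3 - 1)) ^ 2) +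
        (1 + 3 * Real.pi ^ 3 - 6 * Real.pi ^ 6 + Real.pi ^ 9) / (Real.pi ^ 6 - Real.pi ^ 3)) := by
  have hp3 : (3:ℝ) < Real.pi := Real.pi_gt_three
  have hp0 : (0:ℝ) < Real.pi := by linarith
  have h27 : (27:ℝ) ≤ Real.pi ^ 3 := by nlinarith [sq_nonneg (Real.pi - 3), sq_nonneg Real.pi]
  have hx : (0:ℝ) ≤ Real.pi ^ 3 - 1 := by linarith
  set c := cbrt (Real.pi ^ 3 - 1) with hc
  have hc3 : c ^ 3 = Real.pi ^ 3 - 1 := cbrt_cube hx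
  have hcnn : 0 ≤ c := by rw [hc, cbrt_nonneg_eq hx]; positivity
  have hc1 : 1 ≤ c := by
    by_contra h
    push_neg at h
    have : c ^ 3 < 1 := pow_lt_one₀ hcnn h (by norm_num)
    rw [hc3] at this; linarith
  have hc0 : 0 < c := by linarith
  set u : ℝ := Real.pi - 1 / c + c / Real.pi with hu
  have hu0 : 0 ≤ u := by
    have h1 : 1 / c ≤ 1 := by rw [div_le_one hc0]; exact hc1
    have h2 : 0 ≤ c / Real.pi := by positivity
    simp only [hu]; linarith
  have key : 3 * (1 - Real.pi ^ 3 + Real.pi ^ 6) / (Real.pi ^ 2 * c ^ 2) +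
      (1 + 3 * Real.pi ^ 3 - 6 * Real.pi ^ 6 + Real.pi ^ 9) / (Real.pi ^ 6 - Real.pi ^ 3) = u ^ 3 := by
    have hpp : Real.pi ^ 6 - Real.pi ^ 3 ≠ 0 := by nlinarith [h27, sq_nonneg (Real.pi ^ 3)]
    have h31 : Real.pi ^ 3 - 1 ≠ 0 := by intro h; apply hpp; linear_combination Real.pi ^ 3 * h
    rw [hu]
    field_simp [hu]
    ring_nf
    linear_combination (-(c ^ 3 * Real.pi ^ 3) + c ^ 3 - 3 * c ^ 2 * Real.pi ^ 5 + 3 * c ^ 2 * Real.pi ^ 2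
      - 3 * c * Real.pi ^ 7 + 6 * c * Real.pi ^ 4 - 3 * c * Real.pi - Real.pi ^ 3) * hc3
  rw [key, cbrt_of_cube hu0]
  ring
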